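/- arXiv:1906.11370 — 3 statements merged into one kernel-verified Lean document; each statement's English description precedes it below -/
import Mathlib

section
/- Every unit-norm dual quaternion q (Q(q) = 1) factors as q = q_r · q_b with q_r a unit real quaternion and q_b = 1 + ε·v for some pure real quaternion v; moreover Q(q_b) = 1. -/
set_option maxSynthPendingDepth 2

noncomputable section

/-- Euclidean inner product on ℍ ≅ ℝ⁴. -/
def dotQ (p q : Quaternion ℝ) : ℝ := p.re*q.re + p.imI*q.imI + p.imJ*q.imJ + p.imK*q.imK

/-- Embedding of the real quaternions into the dual quaternions ℍ(𝔻). -/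
def toD (a : Quaternion ℝ) : Quaternion (DualNumber ℝ) :=
  ⟨TrivSqZeroExt.inl a.re, TrivSqZeroExt.inl a.imI, TrivSqZeroExt.inl a.imJ, TrivSqZeroExt.inl a.imK⟩

/-- The central dual unit ε of the dual quaternions. -/
def epsQ : Quaternion (DualNumber ℝ) := ((DualNumber.eps : DualNumber ℝ) : Quaternion (DualNumber ℝ))

/-- The dual quaternion α + εβ determined by two real quaternions. -/
def bqD (a b : Quaternion ℝ) : Quaternion (DualNumber ℝ) := toD a + epsQ * toD b

/-- The element v₀ + ε·w with v₀ ∈ ℝ, w a real quaternion. -/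
def mqD (v₀ : ℝ) (w : Quaternion ℝ) : Quaternion (DualNumber ℝ) :=
  toD ((v₀ : Quaternion ℝ)) + epsQ * toD w

open TrivSqZeroExt Quaternion

lemma toD_re (a : Quaternion ℝ) : (toD a).re = inl a.re := rfl
lemma toD_imI (a : Quaternion ℝ) : (toD a).imI = inl a.imI := rfl
lemma toD_imJ (a : Quaternion ℝ) : (toD a).imJ = inl a.imJ := rfl
lemma toD_imK (a : Quaternion ℝ) : (toD a).imK = inl a.imK := rfl

lemma toD_one : toD 1 = 1 := by ext <;> simp [toD]

lemma toD_zero : toD 0 = 0 := by ext <;> simp [toD]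

lemma toD_add (a b : Quaternion ℝ) : toD (a + b) = toD a + toD b := by
  ext <;> simp [toD_re, toD_imI, toD_imJ, toD_imK]

lemma toD_mul (a b : Quaternion ℝ) : toD (a * b) = toD a * toD b := by
  ext <;> simp [toD_re, toD_imI, toD_imJ, toD_imK, Quaternion.re_mul, Quaternion.imI_mul, Quaternion.imJ_mul,
    Quaternion.imK_mul]

lemma toD_star (a : Quaternion ℝ) : toD (star a) = star (toD a) := by
  ext <;> simp [toD_re, toD_imI, toD_imJ, toD_imK]

lemma epsQ_comm (x : Quaternion (DualNumber ℝ)) : epsQ * x = x * epsQ :=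
  Quaternion.coe_commutes _ _

lemma epsQ_sq : epsQ * epsQ = 0 := by
  rw [epsQ, ← Quaternion.coe_mul, DualNumber.eps_mul_eps, Quaternion.coe_zero]

lemma star_epsQ : star epsQ = epsQ := by ext <;> simp [epsQ]

lemma epsQ_mul_toD (b : Quaternion ℝ) :
    epsQ * toD b = ⟨.inr b.re, .inr b.imI, .inr b.imJ, .inr b.imK⟩ := by
  ext1 <;>
  simp only [epsQ, toD_re, toD_imI, toD_imJ, toD_imK, Quaternion.re_mul, Quaternion.imI_mul, Quaternion.imJ_mul,
    Quaternion.imK_mul, Quaternion.re_coe, Quaternion.imI_coe, Quaternion.imJ_coe,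
    Quaternion.imK_coe, zero_mul, mul_zero, sub_zero, add_zero, zero_add, neg_zero,
    DualNumber.eps, inr_mul_inl, op_smul_eq_mul, one_mul]

lemma epsQ_mul_toD_re (b : Quaternion ℝ) : (epsQ * toD b).re = inr b.re := by
  rw [epsQ_mul_toD]
lemma epsQ_mul_toD_imI (b : Quaternion ℝ) : (epsQ * toD b).imI = inr b.imI := by
  rw [epsQ_mul_toD]
lemma epsQ_mul_toD_imJ (b : Quaternion ℝ) : (epsQ * toD b).imJ = inr b.imJ := by
  rw [epsQ_mul_toD]
lemma epsQ_mul_toD_imK (b : Quaternion ℝ) : (epsQ * toD b).imK = inr b.imK := by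
  rw [epsQ_mul_toD]

lemma bq_mul (a b c d : Quaternion ℝ) :
    (toD a + epsQ * toD b) * (toD c + epsQ * toD d)
      = toD (a*c) + epsQ * toD (a*d + b*c) := by
  have h1 : toD a * (epsQ * toD d) = epsQ * (toD a * toD d) := by
    rw [← mul_assoc, ← epsQ_comm, mul_assoc]
  have h2 : epsQ * toD b * (epsQ * toD d) = 0 := by
    rw [mul_assoc, ← mul_assoc (toD b), ← epsQ_comm (toD b), ← mul_assoc, ← mul_assoc,
      epsQ_sq, zero_mul, zero_mul]
  rw [add_mul, mul_add, mul_add, h1, h2, add_zero, mul_assoc epsQ,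
    toD_mul, toD_add, toD_mul, toD_mul, mul_add]
  rw [add_assoc]

lemma bq_inj {a b c d : Quaternion ℝ}
    (h : toD a + epsQ * toD b = toD c + epsQ * toD d) : a = c ∧ b = d := by
  have h1 := congrArg (fun x : Quaternion (DualNumber ℝ) => x.re) h
  have h2 := congrArg (fun x : Quaternion (DualNumber ℝ) => x.imI) h
  have h3 := congrArg (fun x : Quaternion (DualNumber ℝ) => x.imJ) h
  have h4 := congrArg (fun x : Quaternion (DualNumber ℝ) => x.imK) h
  simp only [Quaternion.re_add, Quaternion.imI_add, Quaternion.imJ_add, Quaternion.imK_add,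
    toD_re, toD_imI, toD_imJ, toD_imK, epsQ_mul_toD_re, epsQ_mul_toD_imI, epsQ_mul_toD_imJ,
    epsQ_mul_toD_imK, TrivSqZeroExt.ext_iff, fst_add, snd_add, fst_inl, snd_inl, fst_inr, snd_inr,
    add_zero, zero_add] at h1 h2 h3 h4
  constructor <;> ext <;> tauto

lemma bq_eq (q : Quaternion (DualNumber ℝ)) :
    q = toD ⟨q.re.fst, q.imI.fst, q.imJ.fst, q.imK.fst⟩
      + epsQ * toD ⟨q.re.snd, q.imI.snd, q.imJ.snd, q.imK.snd⟩ := by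
  erw [epsQ_mul_toD]
  ext1 <;> simp only [toD, Quaternion.re_add, Quaternion.imI_add, Quaternion.imJ_add,
    Quaternion.imK_add] <;> exact (inl_fst_add_inr_snd_eq _).symm

/-- Every unit-norm dual quaternion factors as q = q_r·(1 + ε·v) with q_r a unit real
    quaternion, v a pure real quaternion, and Q(1 + ε·v) = 1. -/
theorem unit_dualQuaternion_decomposition (q : Quaternion (DualNumber ℝ))
    (hq : q * star q = 1) :
    ∃ (qr v : Quaternion ℝ), ‖qr‖ = 1 ∧ v.re = 0 ∧
      q = toD qr * (1 + epsQ * toD v) ∧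
      (1 + epsQ * toD v) * star (1 + epsQ * toD v) = 1 := by
  set A : Quaternion ℝ := ⟨q.re.fst, q.imI.fst, q.imJ.fst, q.imK.fst⟩ with hA
  set B : Quaternion ℝ := ⟨q.re.snd, q.imI.snd, q.imJ.snd, q.imK.snd⟩ with hB
  have hqAB : q = toD A + epsQ * toD B := bq_eq q
  have hstar : star q = toD (star A) + epsQ * toD (star B) := by
    rw [hqAB]
    ext <;> simp [epsQ, toD_re, toD_imI, toD_imJ, toD_imK, epsQ_mul_toD_re, epsQ_mul_toD_imI, epsQ_mul_toD_imJ, epsQ_mul_toD_imK]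
  have key : toD (A * star A) + epsQ * toD (A * star B + B * star A) = toD 1 + epsQ * toD 0 := by
    rw [← bq_mul, ← hqAB, ← hstar, hq, toD_one, toD_zero, mul_zero, add_zero]
  obtain ⟨hAA, hABBA⟩ := bq_inj key
  have hnsq : Quaternion.normSq A = 1 := by
    have h1 : ((Quaternion.normSq A : ℝ) : Quaternion ℝ) = ((1 : ℝ) : Quaternion ℝ) := by
      rw [← Quaternion.self_mul_star, hAA]; norm_num
    exact Quaternion.coe_injective (by exact_mod_cast h1)
  have hnorm : ‖A‖ = 1 := by
    have h2 : ‖A‖ * ‖A‖ = 1 := by rw [← Quaternion.normSq_eq_norm_mul_self, hnsq]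
    nlinarith [norm_nonneg A]
  have hvre : (star A * B).re = 0 := by
    have hre := congrArg (fun x : Quaternion ℝ => x.re) hABBA
    simp [Quaternion.re_mul, Quaternion.re_add] at hre
    simp only [Quaternion.re_mul, Quaternion.re_star, Quaternion.imI_star,
      Quaternion.imJ_star, Quaternion.imK_star]
    linarith
  refine ⟨A, star A * B, hnorm, hvre, ?_, ?_⟩
  · rw [mul_add, mul_one, ← mul_assoc, ← epsQ_comm, mul_assoc, ← toD_mul, ← mul_assoc,
      hAA, one_mul, hqAB]
  · have hst : star (1 + epsQ * toD (star A * B))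
        = toD 1 + epsQ * toD (star (star A * B)) := by
      ext <;> simp [epsQ, toD_re, toD_imI, toD_imJ, toD_imK, epsQ_mul_toD_re, epsQ_mul_toD_imI, epsQ_mul_toD_imJ, epsQ_mul_toD_imK] <;> ring
    rw [hst]
    nth_rewrite 1 [show (1 : Quaternion (DualNumber ℝ)) = toD 1 from toD_one.symm]
    rw [bq_mul]; simp only [one_mul, mul_one]
    have hzero : star (star A * B) + star A * B = 0 := by
      rw [add_comm, Quaternion.self_add_star', hvre]
      norm_num
    rw [hzero, toD_zero, mul_zero, add_zero, toD_one]
end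
end

section
/- Let q be a biquaternion with Q(q) = 1 and let v = v₀ + i·w with v₀ ∈ ℝ and w a pure real quaternion (a 'minquat'). Then T_q(v) := q·v·conj(q*) is again of the form v₀' + i·w' with v₀' ∈ ℝ and w' a pure real quaternion. -/
noncomputable section

/-- Euclidean inner product of vector parts (ℝ³). -/
def dotV (p q : Quaternion ℝ) : ℝ := p.imI*q.imI + p.imJ*q.imJ + p.imK*q.imK

/-- Embedding of the real quaternions into the biquaternions ℍ(ℂ). -/
def toC (a : Quaternion ℝ) : Quaternion ℂ := ⟨(a.re : ℂ), a.imI, a.imJ, a.imK⟩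

/-- The central imaginary unit i of the biquaternions. -/
def qI : Quaternion ℂ := ((Complex.I : ℂ) : Quaternion ℂ)

/-- The biquaternion α + iβ determined by two real quaternions. -/
def bq (a b : Quaternion ℝ) : Quaternion ℂ := toC a + qI * toC b

/-- The involution * : complex conjugation of the coefficients. -/
def cstar (q : Quaternion ℂ) : Quaternion ℂ :=
  ⟨starRingEnd ℂ q.re, starRingEnd ℂ q.imI, starRingEnd ℂ q.imJ, starRingEnd ℂ q.imK⟩

/-- The minquat v₀ + i·w with v₀ ∈ ℝ and w a (pure) real quaternion. -/
def mq (v₀ : ℝ) (w : Quaternion ℝ) : Quaternion ℂ := ((v₀ : ℂ) : Quaternion ℂ) + qI * toC w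

/-- The action T_q(v) = q·v·conj(q*). (`star` is quaternionic conjugation.) -/
def Tq (q v : Quaternion ℂ) : Quaternion ℂ := q * v * star (cstar q)


lemma cstar_mul' (x y : Quaternion ℂ) : cstar (x*y) = cstar x * cstar y := by
  ext <;> simp only [Quaternion.re_mul, Quaternion.imI_mul, Quaternion.imJ_mul,
    Quaternion.imK_mul] <;> simp [cstar]

lemma cstar_star' (x : Quaternion ℂ) : cstar (star x) = star (cstar x) := by
  ext <;> simp only [Quaternion.re_star, Quaternion.imI_star, Quaternion.imJ_star,
    Quaternion.imK_star] <;> simp [cstar]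

lemma cstar_cstar' (x : Quaternion ℂ) : cstar (cstar x) = x := by
  ext <;> simp [cstar]

lemma cstar_mq (v₀ : ℝ) (w : Quaternion ℝ) (hw : w.re = 0) :
    cstar (mq v₀ w) = star (mq v₀ w) := by
  ext <;> simp [cstar, mq, qI, hw, Quaternion.re_mul, Quaternion.imI_mul,
    Quaternion.imJ_mul, Quaternion.imK_mul] <;> simp [toC, hw, Complex.ext_iff]

/-- If Q(q) = 1 and v is a minquat, then T_q(v) = q·v·conj(q*) is again a minquat. -/
theorem Tq_preserves_minquats (q : Quaternion ℂ) (hq : q * star q = 1)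
    (v₀ : ℝ) (w : Quaternion ℝ) (hw : w.re = 0) :
    ∃ (v₀' : ℝ) (w' : Quaternion ℝ), w'.re = 0 ∧ Tq q (mq v₀ w) = mq v₀' w' := by
  set u := Tq q (mq v₀ w) with hu
  have h2 : cstar u = star u := by
    rw [hu, Tq, cstar_mul', cstar_mul', cstar_star', cstar_cstar', cstar_mq v₀ w hw,
      star_mul, star_mul, star_star, mul_assoc]
  rw [Quaternion.ext_iff] at h2
  obtain ⟨h2re, h2i, h2j, h2k⟩ := h2
  simp only [cstar, Complex.ext_iff, Complex.conj_re, Complex.conj_im,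
    Quaternion.re_star, Quaternion.imI_star, Quaternion.imJ_star, Quaternion.imK_star,
    Complex.neg_re, Complex.neg_im] at h2re h2i h2j h2k
  refine ⟨u.re.re, ⟨0, u.imI.im, u.imJ.im, u.imK.im⟩, rfl, ?_⟩
  ext <;>
    simp [mq, qI, Quaternion.re_mul, Quaternion.imI_mul, Quaternion.imJ_mul,
      Quaternion.imK_mul] <;> simp [toC, Complex.ext_iff] <;>
    linarith [h2re.2, h2i.1, h2j.1, h2k.1]
end
end

section
/- Let q = cos(iθ) + q̂·sin(iθ) = cosh(θ) + i·q̂·sinh(θ) be a unit-norm minquat biquaternion with q̂ a unit pure real quaternion, and v = v₀ + i·w a minquat. Then T_q(v) = q·v·q has time component v₀·cosh(2θ) + ⟨w, q̂⟩·sinh(2θ) and space component w + 2⟨w,q̂⟩·sinh²(θ)·q̂ + v₀·sinh(2θ)·q̂, i.e. T_q is a Lorentz boost with rapidity 2θ in direction q̂. -/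
noncomputable section

set_option maxHeartbeats 1000000 in
/-- A unit minquat q = cosh θ + i·q̂·sinh θ acts on minquats as the Lorentz boost of
    rapidity 2θ in direction q̂. -/
theorem boost_formula (θ v₀ : ℝ) (qh w : Quaternion ℝ)
    (hqh : qh.re = 0) (hqh1 : ‖qh‖ = 1) (hw : w.re = 0) :
    mq (Real.cosh θ) (Real.sinh θ • qh) * mq v₀ w * mq (Real.cosh θ) (Real.sinh θ • qh) =
      mq (v₀ * Real.cosh (2*θ) + dotV w qh * Real.sinh (2*θ))
        (w + (2 * dotV w qh * Real.sinh θ ^ 2) • qh + (v₀ * Real.sinh (2*θ)) • qh) := by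
  have hn : qh.imI^2 + qh.imJ^2 + qh.imK^2 = 1 := by
    have := Quaternion.normSq_def' qh
    rw [Quaternion.normSq_eq_norm_mul_self, hqh1] at this
    simpa [hqh] using this.symm
  have hc2 : Real.cosh (2*θ) = Real.cosh θ^2 + Real.sinh θ^2 := by
    rw [two_mul, Real.cosh_add]; ring
  have hs2 : Real.sinh (2*θ) = 2 * Real.sinh θ * Real.cosh θ := by
    rw [two_mul, Real.sinh_add]; ring
  have hcs : Real.cosh θ^2 - Real.sinh θ^2 = 1 := Real.cosh_sq_sub_sinh_sq θ
  ext <;>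
  · simp only [mq, Quaternion.re_mul, Quaternion.imI_mul, Quaternion.imJ_mul,
      Quaternion.imK_mul, Quaternion.re_add, Quaternion.imI_add, Quaternion.imJ_add,
      Quaternion.imK_add]
    simp only [mq, toC, qI, dotV, Quaternion.re_mul, Quaternion.imI_mul, Quaternion.imJ_mul,
      Quaternion.imK_mul, Quaternion.re_add, Quaternion.imI_add, Quaternion.imJ_add,
      Quaternion.imK_add, Quaternion.re_coe, Quaternion.imI_coe, Quaternion.imJ_coe,
      Quaternion.imK_coe, Quaternion.re_smul, Quaternion.imI_smul, Quaternion.imJ_smul,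
      Quaternion.imK_smul, smul_eq_mul, hqh, hw, hc2, hs2]
    apply Complex.ext <;>
    · simp only [Complex.add_re, Complex.add_im, Complex.mul_re, Complex.mul_im,
        Complex.ofReal_re, Complex.ofReal_im, Complex.I_re, Complex.I_im, Complex.neg_re,
        Complex.neg_im, Complex.sub_re, Complex.sub_im, Complex.ofReal_mul, Complex.ofReal_add,
        mul_zero, zero_mul, mul_one, one_mul, neg_zero, sub_zero, zero_sub, add_zero, zero_add,
        ← Complex.ofReal_pow]
      first
      | ring1
      | linear_combination v₀ * Real.sinh θ^2 * hn
      | linear_combination w.imI * hcs - w.imI * Real.sinh θ^2 * hn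
      | linear_combination w.imJ * hcs - w.imJ * Real.sinh θ^2 * hn
      | linear_combination w.imK * hcs - w.imK * Real.sinh θ^2 * hn
end
end
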